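/- Let X_1, X_2, … be i.i.d. random variables with distribution N(0,1), and define R_1(X_{1:n}) = n^{3/2} · p(X_{1:n}, T_n = 1) / p_0(X_{1:n}), where p_0(x) = ∏_{j=1}^n φ(x_j). Then R_1(X_{1:n}) is bounded in probability: for every ε > 0 there exists B > 0 such that P( R_1(X_{1:n}) > B ) ≤ ε for all n ≥ 1. Moreover, deterministically, R_1(x_{1:n}) ≤ exp( z_n² / 2 ) for all x ∈ ℝ^n, where z_n = (1/√n) ∑_{j=1}^n x_j. -/

import Mathlib

open MeasureTheory Filter Finset

/-- The standard normal density `φ(u) = (2π)^{-1/2} exp(-u²/2)`. -/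
noncomputable def stdNormalPDF (u : ℝ) : ℝ :=
  (Real.sqrt (2 * Real.pi))⁻¹ * Real.exp (-u ^ 2 / 2)

/-- The single-cluster marginal `m(x_S)` of a unit-variance normal component with
standard normal prior on the mean, in closed form. -/
noncomputable def clusterMarginal {n : ℕ} (x : Fin n → ℝ) (S : Finset (Fin n)) : ℝ :=
  (Real.sqrt (S.card + 1))⁻¹ * (∏ j ∈ S, stdNormalPDF (x j)) *
    Real.exp ((∑ j ∈ S, x j) ^ 2 / (2 * (S.card + 1)))

/-- The set `𝒜_t(n)` of ordered partitions `(A_1, …, A_t)` of `{1,…,n}` into `t`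
nonempty disjoint sets. -/
def orderedPartitions (n t : ℕ) : Finset (Fin t → Finset (Fin n)) :=
  Finset.univ.filter fun A =>
    (∀ i, (A i).Nonempty) ∧ (∀ i j, i ≠ j → Disjoint (A i) (A j)) ∧
      Finset.univ.biUnion A = Finset.univ

/-- The CRP (α = 1) weight `p(A) = (1/(n!·t!)) ∏_i (|A_i| - 1)!` of an ordered partition
of `{1,…,n}` into `t` parts. -/
noncomputable def crpWeight {n t : ℕ} (A : Fin t → Finset (Fin n)) : ℝ :=
  (1 / ((n.factorial : ℝ) * (t.factorial : ℝ))) * ∏ i, (((A i).card - 1).factorial : ℝ)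

/-- The joint law of the data and the number of clusters under the standard normal DPM
with concentration parameter `α = 1`:
`p(x, T_n = t) = ∑_{A ∈ 𝒜_t(n)} p(A) ∏_i m(x_{A_i})`. -/
noncomputable def pJoint (n t : ℕ) (x : Fin n → ℝ) : ℝ :=
  ∑ A ∈ orderedPartitions n t, crpWeight A * ∏ i, clusterMarginal x (A i)

/-- The posterior probability of one cluster,
`p(T_n = 1 | x) = p(x, T_n = 1) / ∑_{t=1}^n p(x, T_n = t)`. -/
noncomputable def posteriorOne (n : ℕ) (x : Fin n → ℝ) : ℝ :=
  pJoint n 1 x / ∑ t ∈ Finset.Icc 1 n, pJoint n t x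

/-- `p₀(x) = ∏_j φ(x_j)`, the density of i.i.d. standard normal data. -/
noncomputable def pZero {n : ℕ} (x : Fin n → ℝ) : ℝ := ∏ j, stdNormalPDF (x j)

/-- `R_t(x_{1:n}) = n^{3/2} · p(x_{1:n}, T_n = t) / p₀(x_{1:n})`. -/
noncomputable def Rstat (t n : ℕ) (x : Fin n → ℝ) : ℝ :=
  (n : ℝ) ^ (3 / 2 : ℝ) * pJoint n t x / pZero x


section Aux

open Real ProbabilityTheory
open scoped NNReal ENNReal


lemma orderedPartitions_one (n : ℕ) (hn : 1 ≤ n) :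
    orderedPartitions n 1 = {fun _ => (Finset.univ : Finset (Fin n))} := by
  ext A
  simp only [orderedPartitions, Finset.mem_filter, Finset.mem_univ, true_and,
    Finset.mem_singleton]
  constructor
  · rintro ⟨h1, h2, h3⟩
    funext i
    have hi : i = 0 := Subsingleton.elim _ _
    subst hi
    ext j
    simp only [Finset.mem_univ, iff_true]
    have hj : j ∈ Finset.univ.biUnion A := h3 ▸ Finset.mem_univ j
    obtain ⟨k, -, hk⟩ := Finset.mem_biUnion.1 hj
    have : k = 0 := Subsingleton.elim _ _
    exact this ▸ hk
  · rintro rfl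
    refine ⟨fun i => ⟨⟨0, hn⟩, Finset.mem_univ _⟩,
      fun i j hij => absurd (Subsingleton.elim i j) hij, ?_⟩
    ext j
    simp

lemma pJoint_one (n : ℕ) (hn : 1 ≤ n) (x : Fin n → ℝ) :
    pJoint n 1 x = (n : ℝ)⁻¹ * clusterMarginal x Finset.univ := by
  rw [pJoint, orderedPartitions_one n hn, Finset.sum_singleton]
  have hcrp : crpWeight (fun _ : Fin 1 => (Finset.univ : Finset (Fin n))) = (n : ℝ)⁻¹ := by
    rw [crpWeight]
    simp only [Finset.prod_const, Finset.card_univ, Fintype.card_fin, Nat.factorial_one,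
      mul_one, pow_one]
    rw [div_mul_eq_mul_div, one_mul]
    have key : ((n.factorial : ℝ)) = n * (n - 1).factorial := by
      rw [← Nat.mul_factorial_pred (by omega : n ≠ 0)]; push_cast; ring
    have h1 : ((n - 1).factorial : ℝ) ≠ 0 := Nat.cast_ne_zero.2 (Nat.factorial_ne_zero _)
    have h2 : (n : ℝ) ≠ 0 := Nat.cast_ne_zero.2 (by omega)
    rw [key]
    field_simp
    ring
  rw [hcrp]
  simp

lemma stdNormalPDF_pos (u : ℝ) : 0 < stdNormalPDF u := by
  rw [stdNormalPDF]
  positivity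

lemma pZero_pos {n : ℕ} (x : Fin n → ℝ) : 0 < pZero x :=
  Finset.prod_pos fun j _ => stdNormalPDF_pos _

lemma Rstat_one_le (n : ℕ) (hn : 1 ≤ n) (x : Fin n → ℝ) :
    Rstat 1 n x ≤ Real.exp (((∑ j, x j) / Real.sqrt n) ^ 2 / 2) := by
  have npos : (0 : ℝ) < n := by exact_mod_cast hn
  have hp := pZero_pos x
  set S := ∑ j, x j with hS
  have hcm : clusterMarginal x Finset.univ =
      (Real.sqrt (n + 1))⁻¹ * pZero x * Real.exp (S ^ 2 / (2 * (n + 1))) := by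
    rw [clusterMarginal, Finset.card_univ, Fintype.card_fin, pZero]
  have hR : Rstat 1 n x =
      Real.sqrt n / Real.sqrt (n + 1) * Real.exp (S ^ 2 / (2 * (n + 1))) := by
    rw [Rstat, pJoint_one n hn x, hcm]
    have hc : (n : ℝ) ^ (3 / 2 : ℝ) * (n : ℝ)⁻¹ = Real.sqrt n := by
      rw [← Real.rpow_neg_one, ← Real.rpow_add npos, Real.sqrt_eq_rpow]
      norm_num
    rw [← hc]
    field_simp
  rw [hR]
  have h1 : Real.sqrt n / Real.sqrt (n + 1) ≤ 1 := by
    rw [div_le_one (by positivity)]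
    exact Real.sqrt_le_sqrt (by linarith)
  have h2 : Real.exp (S ^ 2 / (2 * (n + 1))) ≤ Real.exp ((S / Real.sqrt n) ^ 2 / 2) := by
    apply Real.exp_le_exp.2
    rw [div_pow, Real.sq_sqrt npos.le, div_div]
    apply div_le_div_of_nonneg_left (sq_nonneg S) (by positivity)
    · rw [mul_comm]; linarith
  calc Real.sqrt n / Real.sqrt (n + 1) * Real.exp (S ^ 2 / (2 * (n + 1)))
      ≤ 1 * Real.exp ((S / Real.sqrt n) ^ 2 / 2) :=
        mul_le_mul h1 h2 (Real.exp_pos _).le zero_le_one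
    _ = _ := one_mul _


lemma integrable_E : Integrable (fun x : ℝ => Real.exp (-(1/2 : ℝ) * x ^ 2)) :=
  integrable_exp_neg_mul_sq (by norm_num)

lemma integrable_mul_E : Integrable (fun x : ℝ => x * Real.exp (-(1/2 : ℝ) * x ^ 2)) :=
  integrable_mul_exp_neg_mul_sq (by norm_num)

lemma integrable_sq_mul_E : Integrable (fun x : ℝ => x ^ 2 * Real.exp (-(1/2 : ℝ) * x ^ 2)) := by
  have h := integrable_rpow_mul_exp_neg_mul_sq (show (0:ℝ) < 1/2 by norm_num)
    (show (-1:ℝ) < ((2:ℕ) : ℝ) by norm_num)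
  have : ∀ x : ℝ, x ^ (((2:ℕ):ℝ)) = x ^ 2 := fun x => Real.rpow_natCast x 2
  simpa [this] using h

lemma tendsto_mul_E_atTop :
    Tendsto (fun x : ℝ => x * Real.exp (-(1/2 : ℝ) * x ^ 2)) atTop (nhds 0) := by
  have h := rpow_mul_exp_neg_mul_sq_isLittleO_exp_neg (show (0:ℝ) < 1/2 by norm_num) 1
  have h0 : Tendsto (fun x : ℝ => Real.exp (-(1/2 : ℝ) * x)) atTop (nhds 0) := by
    apply Real.tendsto_exp_atBot.comp
    apply Tendsto.const_mul_atTop_of_neg (by norm_num : (-(1/2 : ℝ)) < 0) tendsto_id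
  have := h.isBigO.trans_tendsto h0
  simpa [Real.rpow_one] using this

lemma tendsto_mul_E_atBot :
    Tendsto (fun x : ℝ => x * Real.exp (-(1/2 : ℝ) * x ^ 2)) atBot (nhds 0) := by
  have h := (tendsto_mul_E_atTop.comp tendsto_neg_atBot_atTop).neg
  simp only [Function.comp_def, neg_neg, neg_zero] at h
  convert h using 2 with x
  ring_nf

lemma tendsto_E_atTop :
    Tendsto (fun x : ℝ => Real.exp (-(1/2 : ℝ) * x ^ 2)) atTop (nhds 0) := by
  apply Real.tendsto_exp_atBot.comp
  have : Tendsto (fun x : ℝ => x ^ 2) atTop atTop := tendsto_pow_atTop two_ne_zero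
  exact this.const_mul_atTop_of_neg (by norm_num)

lemma tendsto_E_atBot :
    Tendsto (fun x : ℝ => Real.exp (-(1/2 : ℝ) * x ^ 2)) atBot (nhds 0) := by
  have h := tendsto_E_atTop.comp tendsto_neg_atBot_atTop
  simp only [Function.comp_def, neg_sq] at h
  exact h

lemma integral_mul_E : ∫ x : ℝ, x * Real.exp (-(1/2 : ℝ) * x ^ 2) = 0 := by
  have hderiv : ∀ x : ℝ, HasDerivAt (fun y : ℝ => -Real.exp (-(1/2 : ℝ) * y ^ 2))
      (x * Real.exp (-(1/2 : ℝ) * x ^ 2)) x := by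
    intro x
    have h1 : HasDerivAt (fun y : ℝ => -(1/2 : ℝ) * y ^ 2) (-(1/2 : ℝ) * ((2:ℕ) * x ^ (2-1))) x :=
      (hasDerivAt_pow 2 x).const_mul _
    have := (h1.exp).fun_neg
    refine this.congr_deriv ?_
    simp [Nat.cast_ofNat]
    ring
  have := MeasureTheory.integral_of_hasDerivAt_of_tendsto hderiv integrable_mul_E
    tendsto_E_atBot.neg tendsto_E_atTop.neg
  simpa using this

lemma integral_sq_mul_E :
    ∫ x : ℝ, x ^ 2 * Real.exp (-(1/2 : ℝ) * x ^ 2) = Real.sqrt (2 * π) := by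
  have hderiv : ∀ x : ℝ, HasDerivAt (fun y : ℝ => -(y * Real.exp (-(1/2 : ℝ) * y ^ 2)))
      (x ^ 2 * Real.exp (-(1/2 : ℝ) * x ^ 2) - Real.exp (-(1/2 : ℝ) * x ^ 2)) x := by
    intro x
    have h1 : HasDerivAt (fun y : ℝ => -(1/2 : ℝ) * y ^ 2) (-(1/2 : ℝ) * ((2:ℕ) * x ^ (2-1))) x :=
      (hasDerivAt_pow 2 x).const_mul _
    have h2 := ((hasDerivAt_id x).mul h1.exp).fun_neg
    refine h2.congr_deriv ?_
    simp [Nat.cast_ofNat]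
    ring
  have hint : Integrable (fun x : ℝ =>
      x ^ 2 * Real.exp (-(1/2 : ℝ) * x ^ 2) - Real.exp (-(1/2 : ℝ) * x ^ 2)) :=
    integrable_sq_mul_E.sub integrable_E
  have h0 := MeasureTheory.integral_of_hasDerivAt_of_tendsto hderiv hint
    tendsto_mul_E_atBot.neg tendsto_mul_E_atTop.neg
  simp only [neg_zero, sub_zero] at h0
  have h1 := MeasureTheory.integral_sub integrable_sq_mul_E integrable_E
  rw [h1] at h0
  have h2 : ∫ x : ℝ, Real.exp (-(1/2 : ℝ) * x ^ 2) = Real.sqrt (2 * π) := by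
    rw [integral_gaussian]
    congr 1
    rw [div_div_eq_mul_div, div_one]
    ring
  linarith [h0, h2, sub_eq_zero.1 h0]

lemma gaussianPDFReal_zero_one (x : ℝ) :
    gaussianPDFReal 0 1 x = (Real.sqrt (2 * π))⁻¹ * Real.exp (-(1/2:ℝ) * x ^ 2) := by
  rw [gaussianPDFReal]
  simp only [NNReal.coe_one, mul_one, sub_zero]
  congr 1
  ring

lemma integral_gaussianReal_eq (g : ℝ → ℝ) :
    ∫ x, g x ∂(gaussianReal 0 1) = ∫ x, gaussianPDFReal 0 1 x * g x := by
  rw [gaussianReal_of_var_ne_zero 0 one_ne_zero]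
  have hm : Measurable fun x => (gaussianPDFReal 0 1 x).toNNReal :=
    (measurable_gaussianPDFReal 0 1).real_toNNReal
  have heq : (gaussianPDF 0 1) = fun x => (((gaussianPDFReal 0 1 x).toNNReal : ℝ≥0) : ℝ≥0∞) := rfl
  rw [heq, integral_withDensity_eq_integral_smul hm]
  congr 1 with x
  simp [NNReal.smul_def, Real.coe_toNNReal _ (gaussianPDFReal_nonneg 0 1 x)]

lemma integrable_sq_gaussianReal : Integrable (fun x : ℝ => x ^ 2) (gaussianReal 0 1) := by
  rw [gaussianReal_of_var_ne_zero 0 one_ne_zero]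
  have hm : Measurable fun x => (gaussianPDFReal 0 1 x).toNNReal :=
    (measurable_gaussianPDFReal 0 1).real_toNNReal
  have heq : (gaussianPDF 0 1) = fun x => (((gaussianPDFReal 0 1 x).toNNReal : ℝ≥0) : ℝ≥0∞) := rfl
  rw [heq, integrable_withDensity_iff_integrable_smul hm]
  have hfun : (fun x : ℝ => (gaussianPDFReal 0 1 x).toNNReal • (x ^ 2)) =
      fun x : ℝ => (Real.sqrt (2 * π))⁻¹ * (x ^ 2 * Real.exp (-(1/2:ℝ) * x ^ 2)) := by
    ext x
    rw [NNReal.smul_def, Real.coe_toNNReal _ (gaussianPDFReal_nonneg 0 1 x), smul_eq_mul,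
      gaussianPDFReal_zero_one]
    ring
  rw [hfun]
  exact integrable_sq_mul_E.const_mul _

lemma integral_id_gaussianReal : ∫ x, x ∂(gaussianReal 0 1) = 0 := by
  rw [integral_gaussianReal_eq]
  have hfun : (fun x : ℝ => gaussianPDFReal 0 1 x * x) =
      fun x : ℝ => (Real.sqrt (2 * π))⁻¹ * (x * Real.exp (-(1/2:ℝ) * x ^ 2)) := by
    ext x; rw [gaussianPDFReal_zero_one]; ring
  rw [hfun, integral_const_mul, integral_mul_E, mul_zero]

lemma integral_sq_gaussianReal : ∫ x, x ^ 2 ∂(gaussianReal 0 1) = 1 := by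
  rw [integral_gaussianReal_eq]
  have hfun : (fun x : ℝ => gaussianPDFReal 0 1 x * x ^ 2) =
      fun x : ℝ => (Real.sqrt (2 * π))⁻¹ * (x ^ 2 * Real.exp (-(1/2:ℝ) * x ^ 2)) := by
    ext x; rw [gaussianPDFReal_zero_one]; ring
  rw [hfun, integral_const_mul, integral_sq_mul_E]
  exact inv_mul_cancel₀ (by positivity)

lemma memℒp_id_gaussianReal : MemLp (id : ℝ → ℝ) 2 (gaussianReal 0 1) := by
  rw [memLp_two_iff_integrable_sq aestronglyMeasurable_id]
  simpa using integrable_sq_gaussianReal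


end Aux

open Real ProbabilityTheory in
/-- If `X₁, X₂, …` are i.i.d. `N(0,1)` then `R₁(X_{1:n})` is bounded in probability:
for every `ε > 0` there is `B > 0` such that `P(R₁(X_{1:n}) > B) ≤ ε` for all `n ≥ 1`.
Moreover, deterministically, `R₁(x_{1:n}) ≤ exp(z_n²/2)` for all `x ∈ ℝⁿ`, where
`z_n = (1/√n) ∑_j x_j`. -/
theorem Rstat_one_bounded_in_probability {Ω : Type*} [MeasurableSpace Ω]
    (μ : Measure Ω) [IsProbabilityMeasure μ] (X : ℕ → Ω → ℝ)
    (hmeas : ∀ i, Measurable (X i))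
    (hindep : ProbabilityTheory.iIndepFun X μ)
    (hdist : ∀ i, Measure.map (X i) μ = ProbabilityTheory.gaussianReal 0 1) :
    (∀ ε : ℝ, 0 < ε → ∃ B : ℝ, 0 < B ∧ ∀ n : ℕ, 1 ≤ n →
      μ {ω | B < Rstat 1 n fun i : Fin n => X i ω} ≤ ENNReal.ofReal ε) ∧
    ∀ (n : ℕ), 1 ≤ n → ∀ x : Fin n → ℝ,
      Rstat 1 n x ≤ Real.exp (((∑ j, x j) / Real.sqrt n) ^ 2 / 2) := by
  constructor
  · -- boundedness in probability
      have hmem : ∀ i : ℕ, MemLp (X i) 2 μ := by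
        intro i
        have h := memℒp_id_gaussianReal
        rw [← hdist i] at h
        have := (memLp_map_measure_iff aestronglyMeasurable_id (hmeas i).aemeasurable).1 h
        simpa [Function.comp_def] using this
      have hmean : ∀ i : ℕ, μ[X i] = 0 := by
        intro i
        have h := integral_map (μ := μ) (hmeas i).aemeasurable
          (f := fun x : ℝ => x) aestronglyMeasurable_id
        rw [hdist i, _root_.integral_id_gaussianReal] at h
        exact h.symm
      have hsq : ∀ i : ℕ, μ[fun ω => X i ω ^ 2] = 1 := by
        intro i
        have h := integral_map (μ := μ) (hmeas i).aemeasurable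
          (f := fun x : ℝ => x ^ 2) (measurable_id.pow_const 2).aestronglyMeasurable
        rw [hdist i, integral_sq_gaussianReal] at h
        exact h.symm
      have hvar : ∀ i : ℕ, variance (X i) μ = 1 := by
        intro i
        rw [variance_eq_sub (hmem i)]
        have h2 : (X i ^ 2 : Ω → ℝ) = fun ω => X i ω ^ 2 := rfl
        rw [h2, hsq i, hmean i]
        norm_num
      intro ε hε
      set c : ℝ := 1 / Real.sqrt ε with hc
      have hcpos : 0 < c := by positivity
      have hc2 : c ^ 2 = 1 / ε := by
        rw [hc, div_pow, one_pow, Real.sq_sqrt hε.le]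
      refine ⟨Real.exp (c ^ 2 / 2), Real.exp_pos _, fun n hn => ?_⟩
      have npos : (0 : ℝ) < n := by exact_mod_cast hn
      set Y : Fin n → Ω → ℝ := fun i => X i with hY
      have hmemS : MemLp (∑ i, Y i) 2 μ := memLp_finset_sum' _ fun i _ => hmem i
      have hpair : Set.Pairwise ↑(Finset.univ : Finset (Fin n))
          fun i j => IndepFun (Y i) (Y j) μ := by
        intro i _ j _ hij
        exact hindep.indepFun fun h => hij (Fin.val_injective h)
      have hvarS : variance (∑ i, Y i) μ = n :=
        by rw [IndepFun.variance_sum (X := Y) (fun i _ => hmem i) hpair]; simp [hY, hvar]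
      have hmeanS : μ[∑ i, Y i] = 0 := by
        have h : μ[∑ i, Y i] = ∑ i : Fin n, μ[Y i] := by
          simp only [Finset.sum_apply]
          exact integral_finset_sum _ fun i _ => (hmem i).integrable one_le_two
        rw [h]
        simp [hY, hmean]
      have hsn : (0 : ℝ) < Real.sqrt n := Real.sqrt_pos.2 npos
      have hcheb := meas_ge_le_variance_div_sq (μ := μ) hmemS (mul_pos hcpos hsn)
      have hsub : {ω | Real.exp (c ^ 2 / 2) < Rstat 1 n fun i : Fin n => X i ω} ⊆
          {ω | c * Real.sqrt n ≤ |(∑ i, Y i) ω - μ[∑ i, Y i]|} := by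
        intro ω hω
        have hdet := Rstat_one_le n hn fun i : Fin n => X i ω
        have hBlt := lt_of_lt_of_le hω hdet
        have hlt : c ^ 2 < ((∑ j : Fin n, X j ω) / Real.sqrt n) ^ 2 := by
          have := Real.exp_lt_exp.1 hBlt
          linarith
        set t : ℝ := (∑ j : Fin n, X j ω) / Real.sqrt n with ht
        have habs : c < |t| := by
          refine lt_of_pow_lt_pow_left₀ 2 (abs_nonneg t) ?_
          rwa [sq_abs]
        have habs2 : c * Real.sqrt n < |∑ j : Fin n, X j ω| := by
          rw [ht, abs_div, abs_of_nonneg hsn.le] at habs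
          calc c * Real.sqrt n < |∑ j : Fin n, X j ω| / Real.sqrt n * Real.sqrt n := by
                exact mul_lt_mul_of_pos_right habs hsn
            _ = |∑ j : Fin n, X j ω| := by field_simp
        rw [Set.mem_setOf_eq, hmeanS, sub_zero, Finset.sum_apply]
        exact le_of_lt habs2
      refine (measure_mono hsub).trans (hcheb.trans ?_)
      apply ENNReal.ofReal_le_ofReal
      rw [hvarS, mul_pow, Real.sq_sqrt npos.le, hc2]
      have hne : ε ≠ 0 := hε.ne'
      have hnne : (n : ℝ) ≠ 0 := npos.ne'
      exact le_of_eq (by field_simp)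
  · exact fun n hn x => Rstat_one_le n hn x
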